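/- Let n ≥ 5 and let c be a (5,8)-coloring of K_n in which the three edges ux, xy, yv (a path on the distinct vertices u, x, y, v) all have the same color. Then each of the edges uy, xv and uv forms a singleton monochromatic component; that is, no edge sharing a vertex with uy has the same color as uy, and similarly for xv and uv. -/

import Mathlib

/-- The number of distinct colors appearing on the (non-loop) edges of `K_n`
inside the vertex set `S`, under the edge-coloring `c`. -/
noncomputable def numColorsOn {n : ℕ} {C : Type*} (c : Sym2 (Fin n) → C) (S : Finset (Fin n)) : ℕ :=
  (c '' {e : Sym2 (Fin n) | e ∈ S.sym2 ∧ ¬ e.IsDiag}).ncard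

/-- `c` is a `(p,q)`-coloring of `K_n`: every set of `p` vertices spans edges
bearing at least `q` distinct colors. -/
def IsPQColoring (n p q : ℕ) {C : Type*} (c : Sym2 (Fin n) → C) : Prop :=
  ∀ S : Finset (Fin n), S.card = p → q ≤ numColorsOn c S

/-- The edge `ab` forms a singleton monochromatic component: no other edge
sharing an endpoint with `ab` receives the same color as `ab`. -/
def IsSingletonMonoEdge {n : ℕ} {C : Type*} (c : Sym2 (Fin n) → C) (a b : Fin n) : Prop :=
  ∀ w : Fin n, w ≠ a → w ≠ b → c s(a, w) ≠ c s(a, b) ∧ c s(b, w) ≠ c s(a, b)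

variable {n : ℕ} {C : Type*} [DecidableEq C]

lemma filterF (S : Finset (Fin n)) :
    S.sym2.filter (fun e => ¬ e.IsDiag) = S.offDiag.image Sym2.mk.uncurry := by
  ext e
  induction e using Sym2.ind with
  | _ a b =>
    simp only [Finset.mem_filter, Finset.mk_mem_sym2_iff, Sym2.mk_isDiag_iff,
      Finset.mem_image, Finset.mem_offDiag, Prod.exists, Sym2.eq_iff, Function.uncurry_apply_pair]
    constructor
    · rintro ⟨⟨ha, hb⟩, hab⟩; exact ⟨a, b, ⟨ha, hb, hab⟩, Or.inl ⟨rfl, rfl⟩⟩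
    · rintro ⟨p, q, ⟨hp, hq, hpq⟩, (⟨rfl, rfl⟩ | ⟨rfl, rfl⟩)⟩
      exacts [⟨⟨hp, hq⟩, hpq⟩, ⟨⟨hq, hp⟩, fun h => hpq h.symm⟩]

lemma numColorsOn_eq (c : Sym2 (Fin n) → C) (S : Finset (Fin n)) :
    numColorsOn c S = ((S.sym2.filter (fun e => ¬ e.IsDiag)).image c).card := by
  have h : (c '' {e : Sym2 (Fin n) | e ∈ S.sym2 ∧ ¬ e.IsDiag})
      = ↑((S.sym2.filter (fun e => ¬ e.IsDiag)).image c) := by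
    ext a
    simp [Set.mem_image, Finset.mem_image, Finset.mem_filter]
  unfold numColorsOn
  rw [h, Set.ncard_coe_finset]

lemma memF {S : Finset (Fin n)} {a b : Fin n} (ha : a ∈ S) (hb : b ∈ S) (hab : a ≠ b) :
    s(a, b) ∈ S.sym2.filter (fun e => ¬ e.IsDiag) := by
  simp [Finset.mem_filter, Finset.mk_mem_sym2_iff, Sym2.mk_isDiag_iff, ha, hb, hab]

lemma main' (c : Sym2 (Fin n) → C) (hc : IsPQColoring n 5 8 c) (S : Finset (Fin n))
    (hS : S.card = 5) (e1 e2 e3 e4 e5 : Sym2 (Fin n))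
    (h1F : e1 ∈ S.sym2.filter (fun e => ¬ e.IsDiag))
    (h2F : e2 ∈ S.sym2.filter (fun e => ¬ e.IsDiag))
    (h3F : e3 ∈ S.sym2.filter (fun e => ¬ e.IsDiag))
    (h4F : e4 ∈ S.sym2.filter (fun e => ¬ e.IsDiag))
    (h5F : e5 ∈ S.sym2.filter (fun e => ¬ e.IsDiag))
    (hc2 : c e2 = c e1) (hc3 : c e3 = c e1) (hc5 : c e5 = c e4)
    (h23 : e2 ≠ e3) (h25 : e2 ≠ e5) (h35 : e3 ≠ e5)
    (h12 : e1 ≠ e2) (h13 : e1 ≠ e3) (h15 : e1 ≠ e5)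
    (h42 : e4 ≠ e2) (h43 : e4 ≠ e3) (h45 : e4 ≠ e5) : False := by
  set F := S.sym2.filter (fun e => ¬ e.IsDiag) with hF
  have h8 := hc S hS
  rw [numColorsOn_eq] at h8
  have hFcard : F.card = 10 := by
    rw [hF, filterF, Sym2.card_image_offDiag, hS]; decide
  have himg : F.image c = (F \ {e2, e3, e5}).image c := by
    apply Finset.Subset.antisymm
    · intro a ha
      simp only [Finset.mem_image] at ha ⊢
      obtain ⟨e, heF, hce⟩ := ha
      by_cases he2 : e = e2
      · exact ⟨e1, by simp [Finset.mem_sdiff, h1F, h12, h13, h15], by rw [← hce, he2, hc2]⟩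
      by_cases he3 : e = e3
      · exact ⟨e1, by simp [Finset.mem_sdiff, h1F, h12, h13, h15], by rw [← hce, he3, hc3]⟩
      by_cases he5 : e = e5
      · exact ⟨e4, by simp [Finset.mem_sdiff, h4F, h42, h43, h45], by rw [← hce, he5, hc5]⟩
      · exact ⟨e, by simp [Finset.mem_sdiff, heF, he2, he3, he5], hce⟩
    · exact Finset.image_subset_image (Finset.sdiff_subset)
  have hsub : ({e2, e3, e5} : Finset (Sym2 (Fin n))) ⊆ F := by
    intro e he
    simp only [Finset.mem_insert, Finset.mem_singleton] at he
    rcases he with rfl | rfl | rfl <;> assumption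
  have hcard3 : ({e2, e3, e5} : Finset (Sym2 (Fin n))).card = 3 := by
    rw [Finset.card_insert_of_notMem (by simp [h23, h25]),
      Finset.card_insert_of_notMem (by simp [h35]), Finset.card_singleton]
  have hle : (F.image c).card ≤ 7 := by
    rw [himg]
    calc ((F \ {e2, e3, e5}).image c).card ≤ (F \ {e2, e3, e5}).card :=
          Finset.card_image_le
      _ = F.card - 3 := by rw [Finset.card_sdiff_of_subset hsub, hcard3]
      _ = 7 := by omega
  rw [hF] at hle; omega

lemma card5 {u x y v w : Fin n} (hux : u ≠ x) (huy : u ≠ y) (huv : u ≠ v) (huw : u ≠ w)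
    (hxy : x ≠ y) (hxv : x ≠ v) (hxw : x ≠ w) (hyv : y ≠ v) (hyw : y ≠ w) (hvw : v ≠ w) :
    ({u, x, y, v, w} : Finset (Fin n)).card = 5 := by
  rw [Finset.card_insert_of_notMem (by simp [hux, huy, huv, huw]),
    Finset.card_insert_of_notMem (by simp [hxy, hxv, hxw]),
    Finset.card_insert_of_notMem (by simp [hyv, hyw]),
    Finset.card_insert_of_notMem (by simp [hvw]), Finset.card_singleton]

lemma core (c : Sym2 (Fin n) → C) (hc : IsPQColoring n 5 8 c) (u x y v w : Fin n)
    (S : Finset (Fin n)) (hS5 : S.card = 5)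
    (hu : u ∈ S) (hx : x ∈ S) (hy : y ∈ S) (hv : v ∈ S) (hw : w ∈ S)
    (hux : u ≠ x) (huy : u ≠ y) (huv : u ≠ v) (huw : u ≠ w)
    (hxy : x ≠ y) (hxv : x ≠ v) (hxw : x ≠ w) (hyv : y ≠ v) (hyw : y ≠ w) (hvw : v ≠ w)
    (h1 : c s(u, x) = c s(x, y)) (h2 : c s(u, x) = c s(y, v)) :
    ∀ e4 e5 : Sym2 (Fin n),
      (e4 = s(u, x) ∨ e4 = s(u, y) ∨ e4 = s(u, v) ∨ e4 = s(u, w) ∨ e4 = s(x, v) ∨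
        e4 = s(x, w) ∨ e4 = s(y, w) ∨ e4 = s(v, w)) →
      (e5 = s(u, x) ∨ e5 = s(u, y) ∨ e5 = s(u, v) ∨ e5 = s(u, w) ∨ e5 = s(x, v) ∨
        e5 = s(x, w) ∨ e5 = s(y, w) ∨ e5 = s(v, w)) →
      e4 ≠ e5 → c e4 ≠ c e5 := by
  have hxu := hux.symm; have hyu := huy.symm; have hvu := huv.symm; have hwu := huw.symm
  have hyx := hxy.symm; have hvx := hxv.symm; have hwx := hxw.symm
  have hvy := hyv.symm; have hwy := hyw.symm; have hwv := hvw.symm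
  have hfacts : ∀ e : Sym2 (Fin n),
      (e = s(u, x) ∨ e = s(u, y) ∨ e = s(u, v) ∨ e = s(u, w) ∨ e = s(x, v) ∨
        e = s(x, w) ∨ e = s(y, w) ∨ e = s(v, w)) →
      e ∈ S.sym2.filter (fun e => ¬ e.IsDiag) ∧ e ≠ s(x, y) ∧ e ≠ s(y, v) := by
    intro e he
    rcases he with rfl | rfl | rfl | rfl | rfl | rfl | rfl | rfl <;>
      exact ⟨memF (by assumption) (by assumption) (by assumption),
        by simp [Sym2.eq_iff]; tauto, by simp [Sym2.eq_iff]; tauto⟩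
  have hXY : s(x, y) ∈ S.sym2.filter (fun e => ¬ e.IsDiag) := memF hx hy hxy
  have hYV : s(y, v) ∈ S.sym2.filter (fun e => ¬ e.IsDiag) := memF hy hv hyv
  have hUX : s(u, x) ∈ S.sym2.filter (fun e => ¬ e.IsDiag) := memF hu hx hux
  have h23 : s(x, y) ≠ s(y, v) := by simp [Sym2.eq_iff]; tauto
  have h12 : s(u, x) ≠ s(x, y) := by simp [Sym2.eq_iff]; tauto
  have h13 : s(u, x) ≠ s(y, v) := by simp [Sym2.eq_iff]; tauto
  intro e4 e5 h4 h5 hne heq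
  obtain ⟨h4F, h4a, h4b⟩ := hfacts e4 h4
  obtain ⟨h5F, h5a, h5b⟩ := hfacts e5 h5
  by_cases h5x : e5 = s(u, x)
  · subst h5x
    exact main' c hc S hS5 s(u, x) s(x, y) s(y, v) s(u, x) e4 hUX hXY hYV hUX h4F
      h1.symm h2.symm heq h23 h4a.symm h4b.symm h12 h13 hne.symm h12 h13 hne.symm
  · exact main' c hc S hS5 s(u, x) s(x, y) s(y, v) e4 e5 hUX hXY hYV h4F h5F
      h1.symm h2.symm heq.symm h23 h5a.symm h5b.symm h12 h13 (Ne.symm h5x) h4a h4b hne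

/-- In a `(5,8)`-coloring of `K_n` (`n ≥ 5`), if the three edges `ux`, `xy`, `yv`
of a path on the distinct vertices `u, x, y, v` all have the same color, then each
of `uy`, `xv`, `uv` forms a singleton monochromatic component. -/
theorem path_forces_singleton_edges (n : ℕ) (hn : 5 ≤ n) (C : Type)
    (c : Sym2 (Fin n) → C) (hc : IsPQColoring n 5 8 c) (u x y v : Fin n)
    (hux : u ≠ x) (huy : u ≠ y) (huv : u ≠ v) (hxy : x ≠ y) (hxv : x ≠ v) (hyv : y ≠ v)
    (h1 : c s(u, x) = c s(x, y)) (h2 : c s(u, x) = c s(y, v)) :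
    IsSingletonMonoEdge c u y ∧ IsSingletonMonoEdge c x v ∧ IsSingletonMonoEdge c u v := by
  classical
  obtain ⟨w0, hw0u, hw0x, hw0y, hw0v⟩ :
      ∃ w0 : Fin n, w0 ≠ u ∧ w0 ≠ x ∧ w0 ≠ y ∧ w0 ≠ v := by
    by_contra hcon
    push_neg at hcon
    have hsub : (Finset.univ : Finset (Fin n)) ⊆ {u, x, y, v} := by
      intro z _
      simp only [Finset.mem_insert, Finset.mem_singleton]
      by_cases hz1 : z = u; · exact Or.inl hz1
      by_cases hz2 : z = x; · exact Or.inr (Or.inl hz2)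
      by_cases hz3 : z = y; · exact Or.inr (Or.inr (Or.inl hz3))
      exact Or.inr (Or.inr (Or.inr (hcon z hz1 hz2 hz3)))
    have hcard := Finset.card_le_card hsub
    rw [Finset.card_univ, Fintype.card_fin] at hcard
    have a1 := Finset.card_insert_le u ({x, y, v} : Finset (Fin n))
    have a2 := Finset.card_insert_le x ({y, v} : Finset (Fin n))
    have a3 := Finset.card_insert_le y ({v} : Finset (Fin n))
    have a4 : ({v} : Finset (Fin n)).card = 1 := Finset.card_singleton v
    omega
  have K0 := core c hc u x y v w0
    ({u, x, y, v, w0} : Finset (Fin n))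
    (card5 hux huy huv (Ne.symm hw0u) hxy hxv (Ne.symm hw0x) hyv (Ne.symm hw0y)
      (Ne.symm hw0v))
    (by simp) (by simp) (by simp) (by simp) (by simp)
    hux huy huv (Ne.symm hw0u) hxy hxv (Ne.symm hw0x) hyv (Ne.symm hw0y) (Ne.symm hw0v)
    h1 h2
  refine ⟨?_, ?_, ?_⟩
  · -- uy
    intro w hwu hwy
    by_cases hwx : w = x
    · subst hwx
      refine ⟨K0 s(u, w) s(u, y) (Or.inl rfl) (Or.inr (Or.inl rfl))
          (by simp [Sym2.eq_iff]; tauto), ?_⟩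
      rw [show s(y, w) = s(w, y) from Sym2.eq_swap, ← h1]
      exact K0 s(u, w) s(u, y) (Or.inl rfl) (Or.inr (Or.inl rfl))
        (by simp [Sym2.eq_iff]; tauto)
    by_cases hwv : w = v
    · subst hwv
      refine ⟨K0 s(u, w) s(u, y) (Or.inr (Or.inr (Or.inl rfl))) (Or.inr (Or.inl rfl))
          (by simp [Sym2.eq_iff]; tauto), ?_⟩
      rw [← h2]
      exact K0 s(u, x) s(u, y) (Or.inl rfl) (Or.inr (Or.inl rfl))
        (by simp [Sym2.eq_iff]; tauto)
    · have Kw := core c hc u x y v w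
        ({u, x, y, v, w} : Finset (Fin n))
        (card5 hux huy huv (Ne.symm hwu) hxy hxv (Ne.symm hwx) hyv (Ne.symm hwy)
          (Ne.symm hwv))
        (by simp) (by simp) (by simp) (by simp) (by simp)
        hux huy huv (Ne.symm hwu) hxy hxv (Ne.symm hwx) hyv (Ne.symm hwy) (Ne.symm hwv)
        h1 h2
      exact ⟨Kw s(u, w) s(u, y) (Or.inr (Or.inr (Or.inr (Or.inl rfl))))
          (Or.inr (Or.inl rfl)) (by simp [Sym2.eq_iff]; tauto),
        Kw s(y, w) s(u, y) (Or.inr (Or.inr (Or.inr (Or.inr (Or.inr (Or.inr (Or.inl rfl)))))))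
          (Or.inr (Or.inl rfl)) (by simp [Sym2.eq_iff]; tauto)⟩
  · -- xv
    intro w hwx' hwv'
    by_cases hwu : w = u
    · subst hwu
      constructor
      · rw [show s(x, w) = s(w, x) from Sym2.eq_swap]
        exact K0 s(w, x) s(x, v) (Or.inl rfl) (Or.inr (Or.inr (Or.inr (Or.inr (Or.inl rfl)))))
          (by simp [Sym2.eq_iff]; tauto)
      · rw [show s(v, w) = s(w, v) from Sym2.eq_swap]
        exact K0 s(w, v) s(x, v) (Or.inr (Or.inr (Or.inl rfl)))
          (Or.inr (Or.inr (Or.inr (Or.inr (Or.inl rfl))))) (by simp [Sym2.eq_iff]; tauto)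
    by_cases hwy : w = y
    · subst hwy
      constructor
      · rw [show s(x, w) = s(x, w) from rfl, ← h1]
        exact K0 s(u, x) s(x, v) (Or.inl rfl) (Or.inr (Or.inr (Or.inr (Or.inr (Or.inl rfl)))))
          (by simp [Sym2.eq_iff]; tauto)
      · rw [show s(v, w) = s(w, v) from Sym2.eq_swap, ← h2]
        exact K0 s(u, x) s(x, v) (Or.inl rfl) (Or.inr (Or.inr (Or.inr (Or.inr (Or.inl rfl)))))
          (by simp [Sym2.eq_iff]; tauto)
    · have hwu' : w ≠ u := hwu
      have Kw := core c hc u x y v w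
        ({u, x, y, v, w} : Finset (Fin n))
        (card5 hux huy huv (Ne.symm hwu') hxy hxv (Ne.symm hwx') hyv (Ne.symm hwy)
          (Ne.symm hwv'))
        (by simp) (by simp) (by simp) (by simp) (by simp)
        hux huy huv (Ne.symm hwu') hxy hxv (Ne.symm hwx') hyv (Ne.symm hwy) (Ne.symm hwv')
        h1 h2
      exact ⟨Kw s(x, w) s(x, v)
          (Or.inr (Or.inr (Or.inr (Or.inr (Or.inr (Or.inl rfl))))))
          (Or.inr (Or.inr (Or.inr (Or.inr (Or.inl rfl))))) (by simp [Sym2.eq_iff]; tauto),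
        Kw s(v, w) s(x, v)
          (Or.inr (Or.inr (Or.inr (Or.inr (Or.inr (Or.inr (Or.inr rfl)))))))
          (Or.inr (Or.inr (Or.inr (Or.inr (Or.inl rfl))))) (by simp [Sym2.eq_iff]; tauto)⟩
  · -- uv
    intro w hwu hwv
    by_cases hwx : w = x
    · subst hwx
      constructor
      · exact K0 s(u, w) s(u, v) (Or.inl rfl) (Or.inr (Or.inr (Or.inl rfl)))
          (by simp [Sym2.eq_iff]; tauto)
      · rw [show s(v, w) = s(w, v) from Sym2.eq_swap]
        exact K0 s(w, v) s(u, v) (Or.inr (Or.inr (Or.inr (Or.inr (Or.inl rfl)))))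
          (Or.inr (Or.inr (Or.inl rfl))) (by simp [Sym2.eq_iff]; tauto)
    by_cases hwy : w = y
    · subst hwy
      constructor
      · exact K0 s(u, w) s(u, v) (Or.inr (Or.inl rfl)) (Or.inr (Or.inr (Or.inl rfl)))
          (by simp [Sym2.eq_iff]; tauto)
      · rw [show s(v, w) = s(w, v) from Sym2.eq_swap, ← h2]
        exact K0 s(u, x) s(u, v) (Or.inl rfl) (Or.inr (Or.inr (Or.inl rfl)))
          (by simp [Sym2.eq_iff]; tauto)
    · have Kw := core c hc u x y v w
        ({u, x, y, v, w} : Finset (Fin n))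
        (card5 hux huy huv (Ne.symm hwu) hxy hxv (Ne.symm hwx) hyv (Ne.symm hwy)
          (Ne.symm hwv))
        (by simp) (by simp) (by simp) (by simp) (by simp)
        hux huy huv (Ne.symm hwu) hxy hxv (Ne.symm hwx) hyv (Ne.symm hwy) (Ne.symm hwv)
        h1 h2
      exact ⟨Kw s(u, w) s(u, v) (Or.inr (Or.inr (Or.inr (Or.inl rfl))))
          (Or.inr (Or.inr (Or.inl rfl))) (by simp [Sym2.eq_iff]; tauto),
        Kw s(v, w) s(u, v)
          (Or.inr (Or.inr (Or.inr (Or.inr (Or.inr (Or.inr (Or.inr rfl)))))))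
          (Or.inr (Or.inr (Or.inl rfl))) (by simp [Sym2.eq_iff]; tauto)⟩
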